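/- arXiv:1610.06320 — 2 statements merged into one kernel-verified Lean document; each statement's English description precedes it below -/
import Mathlib

section
/- Let p ∈ (1,2] and δ > 0. There exists a constant c > 0 depending only on p such that for all d ≥ 1 and all real d×d matrices P, Q: |F(P) − F(Q)| ≤ c·δ^{(p−2)/2}·|P^sym − Q^sym|; that is, F is Lipschitz continuous on matrices with Lipschitz constant of order δ^{(p−2)/2}. -/
open Matrix

/-- Symmetric part `P^sym = (P + Pᵀ)/2` of a square matrix. -/
noncomputable def msym {d : ℕ} (P : Matrix (Fin d) (Fin d) ℝ) : Matrix (Fin d) (Fin d) ℝ :=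
  (2⁻¹ : ℝ) • (P + Pᵀ)

/-- Frobenius inner product `A:B = ∑ᵢⱼ Aᵢⱼ Bᵢⱼ`. -/
noncomputable def mdot {d : ℕ} (A B : Matrix (Fin d) (Fin d) ℝ) : ℝ :=
  ∑ i, ∑ j, A i j * B i j

/-- Frobenius norm `|A| = (A:A)^(1/2)`. -/
noncomputable def mnorm {d : ℕ} (A : Matrix (Fin d) (Fin d) ℝ) : ℝ :=
  Real.sqrt (mdot A A)

/-- Stress tensor `S(P) = (δ + |P^sym|)^(p-2) • P^sym` (real power, `0^r = 0` for `r < 0`). -/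
noncomputable def Smap (p δ : ℝ) {d : ℕ} (P : Matrix (Fin d) (Fin d) ℝ) :
    Matrix (Fin d) (Fin d) ℝ :=
  ((δ + mnorm (msym P)) ^ (p - 2)) • msym P

/-- Associated function `F(P) = (δ + |P^sym|)^((p-2)/2) • P^sym`. -/
noncomputable def Fmap (p δ : ℝ) {d : ℕ} (P : Matrix (Fin d) (Fin d) ℝ) :
    Matrix (Fin d) (Fin d) ℝ :=
  ((δ + mnorm (msym P)) ^ ((p - 2) / 2)) • msym P

/-- Matrix viewed as a point of Euclidean space (Frobenius geometry). -/
noncomputable def toE {d : ℕ} (A : Matrix (Fin d) (Fin d) ℝ) :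
    EuclideanSpace ℝ (Fin d × Fin d) := WithLp.toLp 2 (fun x => A x.1 x.2)

lemma toE_sub {d : ℕ} (A B : Matrix (Fin d) (Fin d) ℝ) : toE (A - B) = toE A - toE B := by
  ext x; simp [toE]

lemma toE_smul {d : ℕ} (r : ℝ) (A : Matrix (Fin d) (Fin d) ℝ) : toE (r • A) = r • toE A := by
  ext x; simp [toE]

lemma mnorm_toE {d : ℕ} (A : Matrix (Fin d) (Fin d) ℝ) : mnorm A = ‖toE A‖ := by
  rw [EuclideanSpace.norm_eq, mnorm, mdot]
  congr 1
  rw [Fintype.sum_prod_type]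
  simp [toE, Real.norm_eq_abs, sq_abs, sq]

lemma key_half (r δ : ℝ) (hr1 : -1 ≤ r) (hr0 : r ≤ 0) (hδ : 0 < δ)
    {E : Type*} [NormedAddCommGroup E] [NormedSpace ℝ E]
    (u v : E) (hba : ‖v‖ ≤ ‖u‖) :
    ‖((δ + ‖u‖) ^ r) • u - ((δ + ‖v‖) ^ r) • v‖ ≤ 2 * δ ^ r * ‖u - v‖ := by
  have ha : (0:ℝ) ≤ ‖u‖ := norm_nonneg u
  have hb : (0:ℝ) ≤ ‖v‖ := norm_nonneg v
  set a : ℝ := ‖u‖ with hadef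
  set b : ℝ := ‖v‖ with hbdef
  set x : ℝ := δ + a with hxdef
  set y : ℝ := δ + b with hydef
  have hy : 0 < y := by positivity
  have hx : 0 < x := by positivity
  have hyx : y ≤ x := by simp only [hxdef, hydef]; linarith
  have hxr_le_yr : x ^ r ≤ y ^ r := Real.rpow_le_rpow_of_nonpos hy hyx hr0
  have hyr_le : y ^ r ≤ δ ^ r := Real.rpow_le_rpow_of_nonpos hδ (by linarith) hr0
  have hxr_le : x ^ r ≤ δ ^ r := le_trans hxr_le_yr hyr_le
  have hδr : 0 < δ ^ r := Real.rpow_pos_of_pos hδ r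
  have hxrpos : 0 < x ^ r := Real.rpow_pos_of_pos hx r
  have hyrpos : 0 < y ^ r := Real.rpow_pos_of_pos hy r
  have hdec : (x ^ r) • u - (y ^ r) • v = (x ^ r) • (u - v) + (x ^ r - y ^ r) • v := by
    rw [smul_sub, sub_smul]; abel
  rw [hdec]
  -- key scalar inequality
  have ht0 : 0 < x / y := div_pos hx hy
  have ht1 : (1:ℝ) ≤ x / y := (one_le_div hy).mpr hyx
  have hxt : x = y * (x / y) := by field_simp
  have hxrr : x ^ r = y ^ r * (x / y) ^ r := by
    conv_lhs => rw [hxt]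
    rw [Real.mul_rpow hy.le ht0.le]
  have htr : (x / y)⁻¹ ≤ (x / y) ^ r := by
    have := Real.rpow_le_rpow_of_exponent_le ht1 hr1
    rwa [Real.rpow_neg_one] at this
  have h2t : (2:ℝ) ≤ (x / y) ^ r + (x / y) := by
    have hinv : (x / y) * (x / y)⁻¹ = 1 := mul_inv_cancel₀ ht0.ne'
    nlinarith [sq_nonneg (x / y - 1), htr, ht0]
  have hmid : (y ^ r - x ^ r) * y ≤ y ^ r * (x - y) := by
    rw [hxrr]
    conv_rhs => rw [hxt]
    have hnn : 0 ≤ y ^ r * y * ((x / y) ^ r + x / y - 2) :=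
      mul_nonneg (mul_pos hyrpos hy).le (by linarith)
    nlinarith [hnn]
  have hkey : (y ^ r - x ^ r) * b ≤ δ ^ r * ‖u - v‖ := by
    have h1 : (y ^ r - x ^ r) * b ≤ (y ^ r - x ^ r) * y := by
      apply mul_le_mul_of_nonneg_left _ (by linarith)
      simp only [hydef]; linarith
    have h2 : y ^ r * (x - y) ≤ δ ^ r * (x - y) :=
      mul_le_mul_of_nonneg_right hyr_le (by linarith)
    have h3 : x - y ≤ ‖u - v‖ := by
      have := norm_sub_norm_le u v
      simp only [hxdef, hydef]; linarith
    have h4 : δ ^ r * (x - y) ≤ δ ^ r * ‖u - v‖ :=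
      mul_le_mul_of_nonneg_left h3 hδr.le
    linarith
  calc ‖(x ^ r) • (u - v) + (x ^ r - y ^ r) • v‖
      ≤ ‖(x ^ r) • (u - v)‖ + ‖(x ^ r - y ^ r) • v‖ := norm_add_le _ _
    _ = x ^ r * ‖u - v‖ + (y ^ r - x ^ r) * b := by
        rw [norm_smul, norm_smul, Real.norm_eq_abs, Real.norm_eq_abs,
          abs_of_pos hxrpos, abs_of_nonpos (by linarith), ← hbdef]
        ring
    _ ≤ δ ^ r * ‖u - v‖ + δ ^ r * ‖u - v‖ := by
        have := mul_le_mul_of_nonneg_right hxr_le (norm_nonneg (u - v))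
        linarith [hkey]
    _ = 2 * δ ^ r * ‖u - v‖ := by ring

lemma key (r δ : ℝ) (hr1 : -1 ≤ r) (hr0 : r ≤ 0) (hδ : 0 < δ)
    {E : Type*} [NormedAddCommGroup E] [NormedSpace ℝ E] (u v : E) :
    ‖((δ + ‖u‖) ^ r) • u - ((δ + ‖v‖) ^ r) • v‖ ≤ 2 * δ ^ r * ‖u - v‖ := by
  rcases le_total ‖v‖ ‖u‖ with h | h
  · exact key_half r δ hr1 hr0 hδ u v h
  · have := key_half r δ hr1 hr0 hδ v u h
    rwa [norm_sub_rev, norm_sub_rev v u] at this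

/-- For `p ∈ (1,2]` and `δ > 0` there is a constant `c > 0` depending only on `p` such
that for all `d ≥ 1` and all real `d×d` matrices `P, Q`:
`|F(P) - F(Q)| ≤ c * δ^((p-2)/2) * |P^sym - Q^sym|`, i.e. `F` is Lipschitz with constant
of order `δ^((p-2)/2)`. -/
theorem stmt18 (p δ : ℝ) (hp : 1 < p) (hp2 : p ≤ 2) (hδ : 0 < δ) :
    ∃ c : ℝ, 0 < c ∧
      ∀ d : ℕ, 1 ≤ d → ∀ P Q : Matrix (Fin d) (Fin d) ℝ,
        mnorm (Fmap p δ P - Fmap p δ Q)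
          ≤ c * δ ^ ((p - 2) / 2) * mnorm (msym P - msym Q) := by
  refine ⟨2, two_pos, fun d _ P Q => ?_⟩
  set r : ℝ := (p - 2) / 2 with hrdef
  have hr1 : -1 ≤ r := by rw [hrdef]; linarith
  have hr0 : r ≤ 0 := by rw [hrdef]; linarith
  have h := key r δ hr1 hr0 hδ (toE (msym P)) (toE (msym Q))
  have e1 : mnorm (Fmap p δ P - Fmap p δ Q)
      = ‖((δ + ‖toE (msym P)‖) ^ r) • toE (msym P)
          - ((δ + ‖toE (msym Q)‖) ^ r) • toE (msym Q)‖ := by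
    rw [mnorm_toE, toE_sub]
    simp only [Fmap, toE_smul, mnorm_toE, hrdef]
  have e2 : mnorm (msym P - msym Q) = ‖toE (msym P) - toE (msym Q)‖ := by
    rw [mnorm_toE, toE_sub]
  rw [e1, e2]
  exact h
end

section
/- Let p > 1 and δ ≥ 0. For all d ≥ 1 and all real d×d matrices P, Q with P^sym ≠ Q^sym one has the strict monotonicity (S(P)−S(Q)):(P−Q) > 0. -/
open Matrix

/- ### Auxiliary lemmas -/

lemma mdot_self_nonneg {d : ℕ} (A : Matrix (Fin d) (Fin d) ℝ) : 0 ≤ mdot A A := by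
  apply Finset.sum_nonneg
  intro i _
  apply Finset.sum_nonneg
  intro j _
  exact mul_self_nonneg _

lemma mnorm_nonneg {d : ℕ} (A : Matrix (Fin d) (Fin d) ℝ) : 0 ≤ mnorm A :=
  Real.sqrt_nonneg _

lemma mnorm_sq {d : ℕ} (A : Matrix (Fin d) (Fin d) ℝ) : mnorm A ^ 2 = mdot A A :=
  Real.sq_sqrt (mdot_self_nonneg A)

lemma mdot_self_eq_zero {d : ℕ} {A : Matrix (Fin d) (Fin d) ℝ} (h : mdot A A = 0) :
    A = 0 := by
  ext i j
  have h1 : ∀ i ∈ (Finset.univ : Finset (Fin d)), (0:ℝ) ≤ ∑ j, A i j * A i j :=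
    fun i _ => Finset.sum_nonneg fun j _ => mul_self_nonneg _
  have h2 := (Finset.sum_eq_zero_iff_of_nonneg h1).1 h i (Finset.mem_univ i)
  have h3 : ∀ j ∈ (Finset.univ : Finset (Fin d)), (0:ℝ) ≤ A i j * A i j :=
    fun j _ => mul_self_nonneg _
  have h4 := (Finset.sum_eq_zero_iff_of_nonneg h3).1 h2 j (Finset.mem_univ j)
  simpa [mul_self_eq_zero] using h4

lemma mdot_prod {d : ℕ} (A B : Matrix (Fin d) (Fin d) ℝ) :
    mdot A B = ∑ ij : Fin d × Fin d, A ij.1 ij.2 * B ij.1 ij.2 := by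
  rw [mdot, Fintype.sum_prod_type]

/-- Cauchy–Schwarz for the Frobenius inner product. -/
lemma mdot_le_mnorm_mul_mnorm {d : ℕ} (A B : Matrix (Fin d) (Fin d) ℝ) :
    mdot A B ≤ mnorm A * mnorm B := by
  have hcs : (mdot A B) ^ 2 ≤ mdot A A * mdot B B := by
    rw [mdot_prod A B, mdot_prod A A, mdot_prod B B]
    simpa [sq] using Finset.sum_mul_sq_le_sq_mul_sq Finset.univ
      (fun ij : Fin d × Fin d => A ij.1 ij.2) (fun ij : Fin d × Fin d => B ij.1 ij.2)
  have hA := mnorm_sq A; have hB := mnorm_sq B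
  have hab : 0 ≤ mnorm A * mnorm B := mul_nonneg (mnorm_nonneg A) (mnorm_nonneg B)
  nlinarith [sq_nonneg (mdot A B - mnorm A * mnorm B), sq_nonneg (mdot A B + mnorm A * mnorm B)]

/-- `mdot` of a symmetric matrix with `X` equals `mdot` with `Xᵀ`. -/
lemma mdot_transpose_right {d : ℕ} (M X : Matrix (Fin d) (Fin d) ℝ) (hM : Mᵀ = M) :
    mdot M Xᵀ = mdot M X := by
  have hM' : ∀ i j, M j i = M i j := fun i j => by
    conv_lhs => rw [← hM]
    rw [Matrix.transpose_apply]
  rw [mdot, Finset.sum_comm, mdot]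
  refine Finset.sum_congr rfl fun i _ => Finset.sum_congr rfl fun j _ => ?_
  rw [Matrix.transpose_apply, hM' i j]

lemma mdot_add_right {d : ℕ} (M X Y : Matrix (Fin d) (Fin d) ℝ) :
    mdot M (X + Y) = mdot M X + mdot M Y := by
  unfold mdot
  rw [← Finset.sum_add_distrib]
  refine Finset.sum_congr rfl fun i _ => ?_
  rw [← Finset.sum_add_distrib]
  refine Finset.sum_congr rfl fun j _ => ?_
  rw [Matrix.add_apply]; ring

lemma mdot_smul_right {d : ℕ} (r : ℝ) (M X : Matrix (Fin d) (Fin d) ℝ) :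
    mdot M (r • X) = r * mdot M X := by
  unfold mdot
  rw [Finset.mul_sum]
  refine Finset.sum_congr rfl fun i _ => ?_
  rw [Finset.mul_sum]
  refine Finset.sum_congr rfl fun j _ => ?_
  rw [Matrix.smul_apply, smul_eq_mul]; ring

lemma msym_transpose {d : ℕ} (P : Matrix (Fin d) (Fin d) ℝ) : (msym P)ᵀ = msym P := by
  unfold msym
  rw [Matrix.transpose_smul, Matrix.transpose_add, Matrix.transpose_transpose, add_comm]

lemma mdot_msym_right {d : ℕ} (M X : Matrix (Fin d) (Fin d) ℝ) (hM : Mᵀ = M) :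
    mdot M X = mdot M (msym X) := by
  have ht := mdot_transpose_right M X hM
  unfold msym
  rw [mdot_smul_right, mdot_add_right, ht]
  ring

lemma mdot_expand {d : ℕ} (a b : ℝ) (A B : Matrix (Fin d) (Fin d) ℝ) :
    mdot (a • A - b • B) (A - B)
      = a * mdot A A + b * mdot B B - (a + b) * mdot A B := by
  unfold mdot
  rw [Finset.mul_sum, Finset.mul_sum, Finset.mul_sum, ← Finset.sum_add_distrib,
    ← Finset.sum_sub_distrib]
  refine Finset.sum_congr rfl fun i _ => ?_
  rw [Finset.mul_sum, Finset.mul_sum, Finset.mul_sum, ← Finset.sum_add_distrib,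
    ← Finset.sum_sub_distrib]
  refine Finset.sum_congr rfl fun j _ => ?_
  simp only [Matrix.sub_apply, Matrix.smul_apply, smul_eq_mul]
  ring

/-- Strict monotonicity of `t ↦ (δ+t)^(p-2) * t` on `[0,∞)`. -/
lemma gmono {p δ : ℝ} (hp : 1 < p) (hδ : 0 ≤ δ) {a b : ℝ} (hb : 0 ≤ b) (hab : b < a) :
    (δ + b) ^ (p - 2) * b < (δ + a) ^ (p - 2) * a := by
  have ha : 0 < a := lt_of_le_of_lt hb hab
  rcases eq_or_lt_of_le (by linarith : (0:ℝ) ≤ δ + b) with h0 | h0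
  · -- δ + b = 0, so δ = 0 and b = 0
    have hb0 : b = 0 := le_antisymm (by linarith) hb
    have hδ0 : δ = 0 := by linarith
    rw [hb0, hδ0]
    simp only [add_zero, mul_zero, zero_add]
    positivity
  · have h0a : 0 < δ + a := by linarith
    rcases le_or_gt 2 p with hp2 | hp2
    · -- p ≥ 2 : base-monotone with nonneg exponent
      have h1 : (δ + b) ^ (p - 2) ≤ (δ + a) ^ (p - 2) :=
        Real.rpow_le_rpow h0.le (by linarith) (by linarith)
      have h2 : (0:ℝ) < (δ + a) ^ (p - 2) := Real.rpow_pos_of_pos h0a _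
      calc (δ + b) ^ (p - 2) * b ≤ (δ + a) ^ (p - 2) * b :=
            mul_le_mul_of_nonneg_right h1 hb
        _ < (δ + a) ^ (p - 2) * a := by exact mul_lt_mul_of_pos_left hab h2
    · -- 1 < p < 2
      have key : ∀ t : ℝ, 0 < δ + t →
          (δ + t) ^ (p - 2) * t = (δ + t) ^ (p - 1) - δ * (δ + t) ^ (p - 2) := by
        intro t ht
        have : (δ + t) ^ (p - 1) = (δ + t) ^ (p - 2) * (δ + t) := by
          rw [← Real.rpow_add_one (ne_of_gt ht) (p - 2)]
          ring_nf
        rw [this]; ring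
      rw [key a h0a, key b h0]
      have h1 : (δ + b) ^ (p - 1) < (δ + a) ^ (p - 1) :=
        Real.rpow_lt_rpow h0.le (by linarith) (by linarith)
      have h2 : (δ + a) ^ (p - 2) ≤ (δ + b) ^ (p - 2) :=
        Real.rpow_le_rpow_of_nonpos h0 (by linarith) (by linarith)
      have h3 : δ * (δ + a) ^ (p - 2) ≤ δ * (δ + b) ^ (p - 2) :=
        mul_le_mul_of_nonneg_left h2 hδ
      linarith

/-- Strict monotonicity: for `p > 1`, `δ ≥ 0`, all `d ≥ 1` and all real `d×d` matrices
`P, Q` with `P^sym ≠ Q^sym` one has `(S(P) - S(Q)):(P - Q) > 0`. -/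
theorem stmt19 (p δ : ℝ) (hp : 1 < p) (hδ : 0 ≤ δ) (d : ℕ) (hd : 1 ≤ d)
    (P Q : Matrix (Fin d) (Fin d) ℝ) (hPQ : msym P ≠ msym Q) :
    0 < mdot (Smap p δ P - Smap p δ Q) (P - Q) := by
  set A := msym P with hA
  set B := msym Q with hB
  set a := mnorm A with ha
  set b := mnorm B with hbb
  set φa := (δ + a) ^ (p - 2) with hφa
  set φb := (δ + b) ^ (p - 2) with hφb
  have hMsym : (Smap p δ P - Smap p δ Q)ᵀ = Smap p δ P - Smap p δ Q := by
    unfold Smap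
    rw [Matrix.transpose_sub, Matrix.transpose_smul, Matrix.transpose_smul,
      msym_transpose, msym_transpose]
  have hmsub : msym (P - Q) = A - B := by
    rw [hA, hB]; unfold msym
    rw [Matrix.transpose_sub]
    ext i j
    simp only [Matrix.smul_apply, Matrix.sub_apply, Matrix.add_apply, smul_eq_mul]
    ring
  rw [mdot_msym_right _ _ hMsym, hmsub]
  have hSm : Smap p δ P - Smap p δ Q = φa • A - φb • B := rfl
  rw [hSm, mdot_expand]
  have hAA : mdot A A = a ^ 2 := (mnorm_sq A).symm
  have hBB : mdot B B = b ^ 2 := (mnorm_sq B).symm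
  rw [hAA, hBB]
  set c := mdot A B with hc
  have hCS : c ≤ a * b := mdot_le_mnorm_mul_mnorm A B
  have han : 0 ≤ a := mnorm_nonneg A
  have hbn : 0 ≤ b := mnorm_nonneg B
  have hφan : 0 ≤ φa := Real.rpow_nonneg (by linarith) _
  have hφbn : 0 ≤ φb := Real.rpow_nonneg (by linarith) _
  have hid : φa * a ^ 2 + φb * b ^ 2 - (φa + φb) * c
      = (φa + φb) * (a * b - c) + (φa * a - φb * b) * (a - b) := by ring
  rw [hid]
  rcases eq_or_ne a b with hab | hab
  · -- equal norms; then the first term is 2φa(a² − c) > 0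
    have hABne : A ≠ B := hPQ
    have hφapos : 0 < φa := by
      apply Real.rpow_pos_of_pos
      rcases eq_or_lt_of_le han with h0 | h0
      · exfalso
        have hA0 : A = 0 := by
          apply mdot_self_eq_zero
          rw [hAA, ← h0]; norm_num
        have hB0 : B = 0 := by
          apply mdot_self_eq_zero
          rw [hBB, ← hab, ← h0]; norm_num
        exact hABne (hA0.trans hB0.symm)
      · rcases eq_or_lt_of_le hδ with h1 | h1 <;> linarith
    have hsub : 0 < mdot (A - B) (A - B) := by
      rcases lt_or_eq_of_le (mdot_self_nonneg (A - B)) with h | h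
      · exact h
      · exact absurd (sub_eq_zero.1 (mdot_self_eq_zero h.symm)) hABne
    have hexp : mdot (A - B) (A - B) = a ^ 2 + b ^ 2 - 2 * c := by
      have := mdot_expand (1:ℝ) (1:ℝ) A B
      simp only [one_smul, one_mul] at this
      rw [this, hAA, hBB, ← hc]; ring
    rw [hexp, ← hab] at hsub
    have e0 : (φa * a - φb * b) * (a - b) = 0 := by rw [hab]; ring
    have hpos : 0 < (φa + φb) * (a * b - c) := by
      rw [← hab]
      exact mul_pos (by linarith) (by nlinarith)
    linarith
  · -- distinct norms: second term is positive by strict monotonicity of g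
    have hterm2 : 0 < (φa * a - φb * b) * (a - b) := by
      rcases lt_or_gt_of_ne hab with h | h
      · -- a < b
        have := gmono hp hδ han h
        rw [← hφa, ← hφb] at this
        have h1 : φa * a - φb * b < 0 := by linarith
        have h2 : a - b < 0 := by linarith
        exact mul_pos_of_neg_of_neg h1 h2
      · have := gmono hp hδ hbn h
        rw [← hφa, ← hφb] at this
        apply mul_pos (by linarith) (by linarith)
    have hterm1 : 0 ≤ (φa + φb) * (a * b - c) :=
      mul_nonneg (by linarith) (by linarith)
    linarith
end
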